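/- The contraction of Laufer's first example surjects onto X: for every integer k ≥ 1 and every (v₁,v₂,v₃,v₄) ∈ ℂ⁴ with v₂v₄ − v₃² + v₃v₁ᵏ = 0, either there exist x, y₁, y₂ ∈ ℂ with v₁ = y₂, v₂ = x²y₁ + xy₂ᵏ, v₃ = xy₁ + y₂ᵏ, v₄ = y₁, or there exist w, z₁, z₂ ∈ ℂ with v₁ = z₂, v₂ = z₁, v₃ = wz₁, v₄ = w²z₁ − wz₂ᵏ. -/

import Mathlib

/-- The contraction of Laufer's first example surjects onto
    `X = {v ∈ ℂ⁴ : v₂v₄ - v₃² + v₃v₁ᵏ = 0}`. -/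
theorem laufer_first_example_contraction_surjective (k : ℕ) (hk : 1 ≤ k)
    (v₁ v₂ v₃ v₄ : ℂ) (h : v₂ * v₄ - v₃ ^ 2 + v₃ * v₁ ^ k = 0) :
    (∃ x y₁ y₂ : ℂ, v₁ = y₂ ∧ v₂ = x ^ 2 * y₁ + x * y₂ ^ k ∧
      v₃ = x * y₁ + y₂ ^ k ∧ v₄ = y₁) ∨
    (∃ w z₁ z₂ : ℂ, v₁ = z₂ ∧ v₂ = z₁ ∧ v₃ = w * z₁ ∧
      v₄ = w ^ 2 * z₁ - w * z₂ ^ k) := by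
  by_cases h4 : v₄ = 0
  · subst h4
    have h3 : v₃ = 0 ∨ v₃ = v₁ ^ k := by
      have : v₃ * (v₃ - v₁ ^ k) = 0 := by ring_nf; linear_combination -h
      rcases mul_eq_zero.1 this with h' | h'
      · exact Or.inl h'
      · exact Or.inr (sub_eq_zero.1 h')
    rcases h3 with h3 | h3
    · right
      exact ⟨0, v₂, v₁, rfl, rfl, by simp [h3], by ring⟩
    · by_cases h1 : v₁ = 0
      · right
        refine ⟨0, v₂, v₁, rfl, rfl, ?_, by ring⟩
        simp [h3, h1, zero_pow (by omega : k ≠ 0)]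
      · left
        refine ⟨v₂ / v₁ ^ k, 0, v₁, rfl, ?_, ?_, rfl⟩
        · field_simp; ring
        · rw [h3]; ring
  · left
    set x : ℂ := (v₃ - v₁ ^ k) / v₄ with hxdef
    have hx : x * v₄ = v₃ - v₁ ^ k := div_mul_cancel₀ _ h4
    refine ⟨x, v₄, v₁, rfl, ?_, ?_, rfl⟩
    · have h2 : v₂ * v₄ = (x ^ 2 * v₄ + x * v₁ ^ k) * v₄ := by
        linear_combination h - (x * v₄ + v₃) * hx
      exact mul_right_cancel₀ h4 h2
    · linear_combination -hx
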